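/- Each OLS coefficient has the closed form β̂_i = (q_i^o)^T [I - x_{i+1}(q_{i+1}^o)^T] ··· [I - x_p(q_p^o)^T] y for i = 1,...,p-1, and β̂_p = (q_p^o)^T y, where q_i^o = q_i/⟨q_i,q_i⟩. -/

import Mathlib

open Matrix
open InnerProductSpace

/-- Simplified (non-normalized) Gram–Schmidt process. -/
noncomputable def gs {n p : ℕ} (x : Fin p → Fin n → ℝ) (i : Fin p) : Fin n → ℝ :=
  x i - ∑ j : Fin p, if h : j < i then ((gs x j ⬝ᵥ x i) / (gs x j ⬝ᵥ gs x j)) • gs x j else 0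
termination_by i.1
decreasing_by exact h

/-- Product of the projection-style factors `[I - x_k (q_k^o)ᵀ]` over indices `k > i`,
taken in increasing index order. -/
noncomputable def Pprod {n p : ℕ} (x : Fin p → Fin n → ℝ) (i : Fin p) :
    Matrix (Fin n) (Fin n) ℝ :=
  (((List.finRange p).filter (fun k => i < k)).map
    (fun k => (1 : Matrix (Fin n) (Fin n) ℝ) -
      vecMulVec (x k) ((gs x k ⬝ᵥ gs x k)⁻¹ • gs x k))).prod

instance instWFfin (p : ℕ) : WellFoundedLT (Fin p) := inferInstance

noncomputable def toE {n : ℕ} : (Fin n → ℝ) ≃ₗ[ℝ] EuclideanSpace ℝ (Fin n) :=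
  (WithLp.linearEquiv 2 ℝ (Fin n → ℝ)).symm

lemma inner_toE {n : ℕ} (v w : Fin n → ℝ) : (inner ℝ (toE v) (toE w) : ℝ) = v ⬝ᵥ w := by
  simp [toE, EuclideanSpace.inner_eq_star_dotProduct, dotProduct_comm]

lemma norm_sq_toE {n : ℕ} (v : Fin n → ℝ) : (‖toE v‖ : ℝ) ^ 2 = v ⬝ᵥ v := by
  rw [← real_inner_self_eq_norm_sq]; rfl

lemma gs_eq_gramSchmidt {n p : ℕ} (x : Fin p → Fin n → ℝ) (i : Fin p) :
    toE (gs x i) = gramSchmidt ℝ (fun j => toE (x j)) i := by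
  induction i using WellFoundedLT.induction with
  | _ i ih =>
  rw [gramSchmidt_def, gs, map_sub, map_sum]
  congr 1
  have hset : (Finset.univ.filter (fun j : Fin p => j < i)) = Finset.Iio i := by
    ext j; simp
  rw [show (∑ j : Fin p, toE (if h : j < i then
        ((gs x j ⬝ᵥ x i) / (gs x j ⬝ᵥ gs x j)) • gs x j else 0))
      = ∑ j : Fin p, (if j < i then
        toE (((gs x j ⬝ᵥ x i) / (gs x j ⬝ᵥ gs x j)) • gs x j) else 0) from
    Finset.sum_congr rfl (fun j _ => by split <;> simp),
    ← Finset.sum_filter, hset]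
  refine Finset.sum_congr rfl (fun j hj => ?_)
  have hj' : j < i := Finset.mem_Iio.mp hj
  rw [_root_.map_smul, ih j hj', Submodule.starProjection_singleton, ← ih j hj', inner_toE, norm_sq_toE]
  norm_cast

lemma dotProduct_finset_sum {n : ℕ} {ι : Type*} (s : Finset ι) (v : Fin n → ℝ)
    (f : ι → Fin n → ℝ) : v ⬝ᵥ (∑ j ∈ s, f j) = ∑ j ∈ s, v ⬝ᵥ f j := by
  simp only [dotProduct, Finset.sum_apply, Finset.mul_sum]
  rw [Finset.sum_comm]

lemma inner_eq_zero_of_mem_span {n : ℕ} (u : EuclideanSpace ℝ (Fin n))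
    {s : Set (EuclideanSpace ℝ (Fin n))} (h : ∀ v ∈ s, (inner ℝ u v : ℝ) = 0)
    {w : EuclideanSpace ℝ (Fin n)} (hw : w ∈ Submodule.span ℝ s) : (inner ℝ u w : ℝ) = 0 := by
  induction hw using Submodule.span_induction with
  | mem v hv => exact h v hv
  | zero => exact inner_zero_right _
  | add v u' _ _ hv hu => rw [inner_add_right, hv, hu, add_zero]
  | smul c v _ hv => rw [inner_smul_right, hv, mul_zero]

/-- Orthogonality of the Gram–Schmidt vectors. -/
lemma gs_orthogonal {n p : ℕ} (x : Fin p → Fin n → ℝ) {i j : Fin p} (h : i ≠ j) :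
    gs x i ⬝ᵥ gs x j = 0 := by
  rw [← inner_toE, gs_eq_gramSchmidt, gs_eq_gramSchmidt]
  exact gramSchmidt_orthogonal ℝ _ h

lemma gs_self_ne_zero {n p : ℕ} {x : Fin p → Fin n → ℝ} (hli : LinearIndependent ℝ x)
    (i : Fin p) : gs x i ⬝ᵥ gs x i ≠ 0 := by
  have hli' : LinearIndependent ℝ (fun j => toE (x j) : Fin p → EuclideanSpace ℝ (Fin n)) := by
    exact hli.map' toE.toLinearMap toE.ker
  have hne : gramSchmidt ℝ (fun j => toE (x j)) i ≠ 0 := gramSchmidt_ne_zero i hli'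
  rw [← inner_toE, gs_eq_gramSchmidt]
  exact inner_self_ne_zero.mpr hne

/-- gs x i ⬝ x i = gs x i ⬝ gs x i. -/
lemma gs_dot_self {n p : ℕ} (x : Fin p → Fin n → ℝ) (i : Fin p) :
    gs x i ⬝ᵥ x i = gs x i ⬝ᵥ gs x i := by
  have h : gs x i ⬝ᵥ (x i - gs x i) = 0 := by
    nth_rewrite 2 [gs]
    rw [sub_sub_cancel, dotProduct_finset_sum]
    refine Finset.sum_eq_zero (fun j _ => ?_)
    split
    · next hji =>
      rw [dotProduct_smul, gs_orthogonal x (ne_of_gt hji), smul_zero]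
    · exact dotProduct_zero _
  rw [dotProduct_sub] at h
  linarith

/-- gs x i is orthogonal to x k for k < i. -/
lemma gs_dot_lt {n p : ℕ} (x : Fin p → Fin n → ℝ) {i k : Fin p} (h : k < i) :
    gs x i ⬝ᵥ x k = 0 := by
  have hmem : toE (x k) ∈ Submodule.span ℝ
      (gramSchmidt ℝ (fun j => toE (x j)) '' Set.Iic k) := by
    rw [span_gramSchmidt_Iic]
    exact Submodule.subset_span ⟨k, Set.mem_Iic.mpr le_rfl, rfl⟩
  rw [← inner_toE, gs_eq_gramSchmidt]
  refine inner_eq_zero_of_mem_span _ (fun v hv => ?_) hmem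
  obtain ⟨j, hj, rfl⟩ := hv
  exact gramSchmidt_orthogonal ℝ _
    (fun he => absurd (he ▸ hj : i ∈ Set.Iic k) (not_le.mpr h))

/-- gs x i is orthogonal to any vector orthogonal to all the x j. -/
lemma gs_dot_w {n p : ℕ} (x : Fin p → Fin n → ℝ) (i : Fin p) (w : Fin n → ℝ)
    (hw : ∀ j, x j ⬝ᵥ w = 0) : gs x i ⬝ᵥ w = 0 := by
  have hmem : toE (gs x i) ∈ Submodule.span ℝ (Set.range (fun j => toE (x j))) := by
    rw [gs_eq_gramSchmidt, ← span_gramSchmidt ℝ (fun j => toE (x j))]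
    exact Submodule.subset_span ⟨i, rfl⟩
  rw [← inner_toE, real_inner_comm]
  refine inner_eq_zero_of_mem_span _ (fun v hv => ?_) hmem
  obtain ⟨j, rfl⟩ := hv
  rw [real_inner_comm, inner_toE]
  exact hw j

lemma vecMulVec_mulVec' {n : ℕ} (v w u : Fin n → ℝ) :
    vecMulVec v w *ᵥ u = (w ⬝ᵥ u) • v := by
  funext k
  simp [vecMulVec_apply, mulVec, dotProduct, Finset.mul_sum, mul_assoc, mul_comm,
    Pi.smul_apply, smul_eq_mul, mul_left_comm]

lemma mulVec_eq_sum' {n p : ℕ} (X : Matrix (Fin n) (Fin p) ℝ) (x : Fin p → Fin n → ℝ)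
    (hx : x = fun i k => X k i) (e : Fin p → ℝ) : X *ᵥ e = ∑ j, e j • x j := by
  funext k
  simp [mulVec, dotProduct, hx, Finset.sum_apply, mul_comm]

lemma residual_orth {n p : ℕ} (X : Matrix (Fin n) (Fin p) ℝ) (y : Fin n → ℝ)
    (x : Fin p → Fin n → ℝ) (hx : x = fun i k => X k i)
    (hli : LinearIndependent ℝ x)
    (β : Fin p → ℝ) (hβ : β = ((Xᵀ * X)⁻¹ * Xᵀ) *ᵥ y) (j : Fin p) :
    x j ⬝ᵥ (y - X *ᵥ β) = 0 := by
  have hinj : Function.Injective (X.mulVec) := by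
    intro c d hcd
    have h0 : X *ᵥ (c - d) = 0 := by
      rw [Matrix.mulVec_sub, hcd, sub_self]
    have hsum : ∑ j, (c - d) j • x j = 0 := by rw [← mulVec_eq_sum' X x hx, h0]
    have := Fintype.linearIndependent_iff.mp hli (c - d) hsum
    funext k
    have := this k
    simpa [sub_eq_zero] using this
  have hunit : IsUnit (Xᵀ * X) := by
    rw [← Matrix.conjTranspose_eq_transpose_of_trivial]
    apply Matrix.mulVec_injective_iff_isUnit.mp
    intro c d hcd
    apply hinj
    have h0 : (Xᴴ * X) *ᵥ (c - d) = 0 := by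
      rw [Matrix.mulVec_sub, hcd, sub_self]
    rw [Matrix.conjTranspose_mul_self_mulVec_eq_zero] at h0
    rw [← sub_eq_zero, ← Matrix.mulVec_sub]
    exact h0
  have hnorm : (Xᵀ * X) *ᵥ β = Xᵀ *ᵥ y := by
    rw [hβ, Matrix.mulVec_mulVec, ← Matrix.mul_assoc,
      Matrix.mul_nonsing_inv _ ((Matrix.isUnit_iff_isUnit_det _).mp hunit), Matrix.one_mul]
  have key : Xᵀ *ᵥ (y - X *ᵥ β) = 0 := by
    rw [Matrix.mulVec_sub, Matrix.mulVec_mulVec, hnorm, sub_self]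
  have : (Xᵀ *ᵥ (y - X *ᵥ β)) j = 0 := by rw [key]; rfl
  rw [← this]
  simp [mulVec, dotProduct, hx, transpose_apply]

lemma claimG {n p : ℕ} (X : Matrix (Fin n) (Fin p) ℝ) (y : Fin n → ℝ)
    (x : Fin p → Fin n → ℝ) (hx : x = fun i k => X k i)
    (hli : LinearIndependent ℝ x)
    (β : Fin p → ℝ) (hβ : β = ((Xᵀ * X)⁻¹ * Xᵀ) *ᵥ y) (i : Fin p) :
    ((gs x i ⬝ᵥ gs x i)⁻¹ • gs x i) ⬝ᵥ
      (y - ∑ k ∈ Finset.univ.filter (fun k : Fin p => (i : ℕ) < (k : ℕ)), β k • x k) = β i := by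
  set q := gs x i with hq
  have hw : q ⬝ᵥ (y - X *ᵥ β) = 0 :=
    gs_dot_w x i _ (fun j => residual_orth X y x hx hli β hβ j)
  have hqy : q ⬝ᵥ y = ∑ k, β k * (q ⬝ᵥ x k) := by
    rw [dotProduct_sub, sub_eq_zero] at hw
    rw [hw, mulVec_eq_sum' X x hx, dotProduct_finset_sum]
    simp [dotProduct_smul]
  have hmain : q ⬝ᵥ (y - ∑ k ∈ Finset.univ.filter (fun k : Fin p => (i : ℕ) < (k : ℕ)), β k • x k)
      = β i * (q ⬝ᵥ q) := by
    rw [dotProduct_sub, dotProduct_finset_sum, hqy]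
    have hsplit := Finset.sum_filter_add_sum_filter_not Finset.univ
      (fun k : Fin p => (i : ℕ) < (k : ℕ)) (fun k => β k * (q ⬝ᵥ x k))
    have hrest : ∑ k ∈ Finset.univ.filter (fun k : Fin p => ¬ (i : ℕ) < (k : ℕ)),
        β k * (q ⬝ᵥ x k) = β i * (q ⬝ᵥ q) := by
      rw [Finset.sum_eq_single i]
      · rw [hq, gs_dot_self]
      · intro k hk hki
        have hk' : (k : ℕ) ≤ (i : ℕ) := by simpa using (Finset.mem_filter.mp hk).2
        have : k < i := lt_of_le_of_ne (by exact_mod_cast hk') hki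
        rw [hq, gs_dot_lt x this, mul_zero]
      · intro hi
        exact absurd (Finset.mem_filter.mpr ⟨Finset.mem_univ i, by simp⟩) hi
    have : ∑ k, β k * (q ⬝ᵥ x k)
        = (∑ k ∈ Finset.univ.filter (fun k : Fin p => (i : ℕ) < (k : ℕ)), β k * (q ⬝ᵥ x k))
          + β i * (q ⬝ᵥ q) := by rw [← hrest, hsplit]
    rw [this]
    simp [dotProduct_smul]
  rw [smul_dotProduct, hmain, smul_eq_mul]
  rw [mul_comm (β i), ← mul_assoc]
  rw [inv_mul_cancel₀ (gs_self_ne_zero hli i), one_mul]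

lemma main_list {n p : ℕ} (y : Fin n → ℝ) (x : Fin p → Fin n → ℝ) (β : Fin p → ℝ)
    (hG : ∀ i : Fin p, ((gs x i ⬝ᵥ gs x i)⁻¹ • gs x i) ⬝ᵥ
      (y - ∑ k ∈ Finset.univ.filter (fun k : Fin p => (i : ℕ) < (k : ℕ)), β k • x k) = β i)
    (l : List (Fin p)) (hsort : l.Pairwise (· < ·)) (m : ℕ)
    (hmem : ∀ k : Fin p, k ∈ l ↔ m ≤ (k : ℕ)) :
    ((l.map (fun k => (1 : Matrix (Fin n) (Fin n) ℝ) -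
      vecMulVec (x k) ((gs x k ⬝ᵥ gs x k)⁻¹ • gs x k))).prod) *ᵥ y
      = y - ∑ k ∈ Finset.univ.filter (fun k : Fin p => m ≤ (k : ℕ)), β k • x k := by
  induction l generalizing m with
  | nil =>
    have hempty : Finset.univ.filter (fun k : Fin p => m ≤ (k : ℕ)) = ∅ := by
      refine Finset.filter_eq_empty_iff.mpr (fun k _ => ?_)
      intro hle
      exact absurd ((hmem k).mpr hle) List.not_mem_nil
    rw [hempty, Finset.sum_empty, sub_zero, List.map_nil, List.prod_nil, Matrix.one_mulVec]
  | cons a t ih =>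
    obtain ⟨hat, hts⟩ := List.pairwise_cons.mp hsort
    have ham : (a : ℕ) = m := by
      have h1 : m ≤ (a : ℕ) := (hmem a).mp List.mem_cons_self
      refine le_antisymm ?_ h1
      by_contra hcon
      push_neg at hcon
      have hmp : m < p := lt_of_le_of_lt h1 a.isLt
      have hb : (⟨m, hmp⟩ : Fin p) ∈ a :: t := (hmem ⟨m, hmp⟩).mpr le_rfl
      rcases List.mem_cons.mp hb with hba | hbt
      · exact absurd (congrArg Fin.val hba).symm (Nat.ne_of_gt hcon)
      · exact absurd (hat _ hbt) (by simp [Fin.lt_def]; omega)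
    have hmt : ∀ k : Fin p, k ∈ t ↔ m + 1 ≤ (k : ℕ) := by
      intro k
      constructor
      · intro hk
        have := hat k hk
        rw [Fin.lt_def, ham] at this
        omega
      · intro hk
        have : k ∈ a :: t := (hmem k).mpr (by omega)
        rcases List.mem_cons.mp this with hka | hkt
        · exfalso; rw [hka] at hk; omega
        · exact hkt
    rw [List.map_cons, List.prod_cons, ← Matrix.mulVec_mulVec, ih hts (m + 1) hmt,
      Matrix.sub_mulVec, Matrix.one_mulVec, vecMulVec_mulVec']
    have hfil : Finset.univ.filter (fun k : Fin p => m + 1 ≤ (k : ℕ))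
        = Finset.univ.filter (fun k : Fin p => (a : ℕ) < (k : ℕ)) := by
      ext k; simp [ham]
    rw [hfil, hG a]
    have hins : Finset.univ.filter (fun k : Fin p => m ≤ (k : ℕ))
        = insert a (Finset.univ.filter (fun k : Fin p => (a : ℕ) < (k : ℕ))) := by
      ext k
      simp only [Finset.mem_filter, Finset.mem_univ, true_and, Finset.mem_insert]
      constructor
      · intro hk
        rcases Nat.eq_or_lt_of_le hk with he | hlt
        · exact Or.inl (Fin.ext (by omega))
        · exact Or.inr (by omega)
      · rintro (rfl | hk) <;> omega
    have hnotmem : a ∉ Finset.univ.filter (fun k : Fin p => (a : ℕ) < (k : ℕ)) := by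
      simp
    rw [hins, Finset.sum_insert hnotmem, sub_sub, add_comm]

theorem coefficients_closed_form {n p : ℕ} (X : Matrix (Fin n) (Fin p) ℝ) (y : Fin n → ℝ)
    (x : Fin p → Fin n → ℝ) (hx : x = fun i k => X k i)
    (hli : LinearIndependent ℝ x)
    (β : Fin p → ℝ) (hβ : β = ((Xᵀ * X)⁻¹ * Xᵀ) *ᵥ y) (i : Fin p) :
    β i = ((gs x i ⬝ᵥ gs x i)⁻¹ • gs x i) ⬝ᵥ (Pprod x i *ᵥ y) := by
  have hG := fun j => claimG X y x hx hli β hβ j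
  have hsort : ((List.finRange p).filter (fun k => i < k)).Pairwise (· < ·) :=
    (List.pairwise_lt_finRange p).filter _
  have hmem : ∀ k : Fin p, k ∈ (List.finRange p).filter (fun k => i < k)
      ↔ (i : ℕ) + 1 ≤ (k : ℕ) := by
    intro k
    simp only [List.mem_filter, List.mem_finRange, true_and, decide_eq_true_eq, Fin.lt_def]
    omega
  rw [Pprod, main_list y x β hG _ hsort ((i : ℕ) + 1) hmem]
  have hfil : Finset.univ.filter (fun k : Fin p => (i : ℕ) + 1 ≤ (k : ℕ))
      = Finset.univ.filter (fun k : Fin p => (i : ℕ) < (k : ℕ)) := by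
    ext k; simp
  rw [hfil, hG i]
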